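/- The law of the random bijection σ driving the infinite q-shuffle (the Mallows measure Q on the group of all bijections of ℕ) is invariant under group inversion: for every n ≥ 1 and every injective map f : {1, ..., n} → ℕ, P(σ(j) = f(j) for all j ∈ {1, ..., n}) = P(σ(f(j)) = j for all j ∈ {1, ..., n}). -/

import Mathlib

open MeasureTheory ProbabilityTheory Finset

/-- The first `j` values `σ(0), …, σ(j-1)` of the infinite `q`-shuffle permutation driven by
the (0-indexed) geometric choices `x`. -/
noncomputable def shufflePrefix (x : ℕ → ℕ) : ℕ → List ℕ
  | 0 => []
  | j + 1 => shufflePrefix x j ++ [Nat.nth (fun m => m ∉ shufflePrefix x j) (x j)]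

/-- The random injection `σ : ℕ → ℕ` driving the infinite `q`-shuffle: `σ(j)` is the
`x j`-th smallest (0-indexed) natural number not in `{σ(0), …, σ(j-1)}`. -/
noncomputable def shuffleSeq (x : ℕ → ℕ) (j : ℕ) : ℕ :=
  Nat.nth (fun m => m ∉ shufflePrefix x j) (x j)

lemma notMem_infinite (L : List ℕ) : {m : ℕ | m ∉ L}.Infinite := by
  have h : {m : ℕ | m ∈ L}.Finite := L.finite_toSet
  simpa [Set.compl_setOf] using h.infinite_compl

lemma shuffleSeq_notMem (x : ℕ → ℕ) (j : ℕ) : shuffleSeq x j ∉ shufflePrefix x j :=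
  Nat.nth_mem_of_infinite (notMem_infinite _) (x j)

lemma mem_shufflePrefix (x : ℕ → ℕ) (k m : ℕ) :
    m ∈ shufflePrefix x k ↔ ∃ i, i < k ∧ shuffleSeq x i = m := by
  induction k with
  | zero => simp [shufflePrefix]
  | succ k ih =>
    show m ∈ _ ++ [_] ↔ _
    rw [List.mem_append]
    constructor
    · rintro (h | h)
      · obtain ⟨i, hi, hs⟩ := ih.1 h
        exact ⟨i, Nat.lt_succ_of_lt hi, hs⟩
      · exact ⟨k, Nat.lt_succ_self k, (List.mem_singleton.1 h).symm⟩
    · rintro ⟨i, hi, hs⟩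
      rcases Nat.lt_succ_iff_lt_or_eq.1 hi with h | rfl
      · exact Or.inl (ih.2 ⟨i, h, hs⟩)
      · exact Or.inr (List.mem_singleton.2 hs.symm)

lemma shuffleSeq_injective (x : ℕ → ℕ) : Function.Injective (shuffleSeq x) := by
  intro i j hij
  by_contra hne
  wlog h : i < j generalizing i j
  · exact this hij.symm (Ne.symm hne) (by omega)
  · exact shuffleSeq_notMem x j ((mem_shufflePrefix x j _).2 ⟨i, h, hij⟩)

section Comb
variable {n : ℕ} (f : Fin n → ℕ)

/-- position-`j` geometric value forced by the event `σ = f` on `[0,n)`. -/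
def cconst (j : Fin n) : ℕ :=
  ((Finset.range (f j)).filter (fun m => ∀ i : Fin n, (i : ℕ) < (j : ℕ) → f i ≠ m)).card

/-- inversions below `j`. -/
def aconst (j : Fin n) : ℕ :=
  (Finset.univ.filter (fun i : Fin n => (i : ℕ) < (j : ℕ) ∧ f j < f i)).card

/-- number of pending small values at time `k`. -/
def rconst (k : ℕ) : ℕ := (Finset.univ.filter (fun j : Fin n => k < f j)).card

def dconst (j : Fin n) : ℕ :=
  ((Finset.range (f j)).filter (fun m => ∀ i : Fin n, f i ≠ m)).card

def Nbd : ℕ := (Finset.univ.sup f) + 1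

lemma lt_Nbd (j : Fin n) : f j < Nbd f :=
  Nat.lt_succ_of_le (Finset.le_sup (Finset.mem_univ j))

/-- condition on coordinate `k` for the inverse event -/
def condT (k v : ℕ) : Prop :=
  (∀ j : Fin n, f j = k → v = aconst f j) ∧ ((∀ j : Fin n, f j ≠ k) → rconst f k ≤ v)

lemma card_filter_fin (t : ℕ) (ht : t ≤ n) (pm : ℕ → Prop) [DecidablePred pm]
    (Q : Fin n → Prop) [DecidablePred Q] (h : ∀ i : Fin n, (i : ℕ) < t → (pm i ↔ Q i)) :
    ((Finset.range t).filter pm).card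
      = (Finset.univ.filter (fun i : Fin n => (i : ℕ) < t ∧ Q i)).card := by
  refine Finset.card_bij' (fun m hm => (⟨m, by
      have := Finset.mem_range.1 (Finset.mem_filter.1 hm).1; omega⟩ : Fin n))
    (fun i _ => (i : ℕ)) ?_ ?_ ?_ ?_
  · intro m hm
    have h1 := Finset.mem_filter.1 hm
    have h2 := Finset.mem_range.1 h1.1
    simp only [Finset.mem_filter, Finset.mem_univ, true_and]
    exact ⟨h2, (h _ h2).1 h1.2⟩
  · intro i hi
    have h1 := (Finset.mem_filter.1 hi).2
    simp only [Finset.mem_filter, Finset.mem_range]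
    exact ⟨h1.1, (h _ h1.1).2 h1.2⟩
  · intro m hm; rfl
  · intro i hi; rfl

lemma memA (x : ℕ → ℕ) (k : ℕ) (hk : k ≤ n)
    (hσ : ∀ j : Fin n, (j : ℕ) < k → shuffleSeq x j = f j) (m : ℕ) :
    m ∈ shufflePrefix x k ↔ ∃ j : Fin n, (j : ℕ) < k ∧ f j = m := by
  rw [mem_shufflePrefix]
  constructor
  · rintro ⟨i, hik, hs⟩
    exact ⟨⟨i, lt_of_lt_of_le hik hk⟩, hik, by rw [← hσ ⟨i, lt_of_lt_of_le hik hk⟩ hik]; exact hs⟩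
  · rintro ⟨j, hjk, hm⟩
    exact ⟨j, hjk, by rw [hσ j hjk]; exact hm⟩

lemma stepA (hf : Function.Injective f) (x : ℕ → ℕ) (j : Fin n)
    (hσ : ∀ i : Fin n, (i : ℕ) < (j : ℕ) → shuffleSeq x i = f i) :
    shuffleSeq x j = f j ↔ x j = cconst f j := by
  have hmem := memA f x (j : ℕ) (le_of_lt j.2) hσ
  have hpf : f j ∉ shufflePrefix x (j : ℕ) := by
    intro h
    obtain ⟨i, hij, he⟩ := (hmem (f j)).1 h
    have : i = j := hf he
    omega
  have hcount : Nat.count (fun m => m ∉ shufflePrefix x (j : ℕ)) (f j) = cconst f j := by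
    rw [Nat.count_eq_card_filter_range, cconst]
    congr 1
    apply Finset.filter_congr
    intro m hm
    rw [hmem m]
    push_neg
    rfl
  constructor
  · intro h
    apply Nat.nth_injective (notMem_infinite (shufflePrefix x (j : ℕ)))
    show Nat.nth _ _ = Nat.nth _ _
    rw [← hcount, Nat.nth_count hpf]
    exact h
  · intro h
    show Nat.nth _ (x (j : ℕ)) = f j
    rw [h, ← hcount]
    exact Nat.nth_count hpf

lemma lemA (hf : Function.Injective f) (x : ℕ → ℕ) :
    (∀ j : Fin n, shuffleSeq x j = f j) ↔ (∀ j : Fin n, x j = cconst f j) := by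
  constructor
  · intro h j
    exact (stepA f hf x j (fun i _ => h i)).1 (h j)
  · intro h
    suffices H : ∀ k : ℕ, ∀ j : Fin n, (j : ℕ) = k → shuffleSeq x j = f j by
      exact fun j => H j j rfl
    intro k
    induction k using Nat.strong_induction_on with
    | _ k ih =>
      rintro j rfl
      exact (stepA f hf x j (fun i hi => ih i hi i rfl)).2 (h j)

lemma countB (hf : Function.Injective f) (x : ℕ → ℕ) (k : ℕ)
    (hmemk : ∀ j : Fin n, ((j : ℕ) ∈ shufflePrefix x k ↔ f j < k)) (j0 : Fin n)
    (hk : f j0 = k) :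
    Nat.count (fun m => m ∉ shufflePrefix x k) (j0 : ℕ) = aconst f j0 := by
  rw [Nat.count_eq_card_filter_range, aconst]
  apply card_filter_fin (j0 : ℕ) (le_of_lt j0.2)
  intro i hi
  have hne : f i ≠ k := fun h => by
    have : i = j0 := hf (h.trans hk.symm); omega
  rw [hmemk i]
  omega

lemma mainB (hf : Function.Injective f) (x : ℕ → ℕ)
    (hT : ∀ k, k < Nbd f → condT f k (x k)) :
    ∀ k, k ≤ Nbd f →
      (∀ j : Fin n, f j < k → shuffleSeq x (f j) = (j : ℕ)) ∧
      (∀ j : Fin n, ((j : ℕ) ∈ shufflePrefix x k ↔ f j < k)) := by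
  intro k
  induction k with
  | zero =>
    intro _
    refine ⟨fun j hj => absurd hj (Nat.not_lt_zero _), fun j => ?_⟩
    simp [shufflePrefix]
  | succ k ih =>
    intro hk1
    have hkN : k < Nbd f := hk1
    obtain ⟨IH1, IH2⟩ := ih (le_of_lt hk1)
    obtain ⟨hT1, hT2⟩ := hT k hkN
    have hmemsucc : ∀ m : ℕ, m ∈ shufflePrefix x (k + 1) ↔
        m ∈ shufflePrefix x k ∨ m = shuffleSeq x k := by
      intro m
      show m ∈ _ ++ [_] ↔ _
      rw [List.mem_append, List.mem_singleton]
      rfl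
    by_cases hex : ∃ j0 : Fin n, f j0 = k
    · obtain ⟨j0, hj0⟩ := hex
      have hpj0 : (j0 : ℕ) ∉ shufflePrefix x k := fun h => by
        have := (IH2 j0).1 h; omega
      have hσk : shuffleSeq x k = (j0 : ℕ) := by
        show Nat.nth _ (x k) = _
        rw [hT1 j0 hj0, ← countB f hf x k IH2 j0 hj0]
        exact Nat.nth_count hpj0
      constructor
      · intro j hj
        rcases Nat.lt_succ_iff_lt_or_eq.1 hj with h | h
        · exact IH1 j h
        · have : j = j0 := hf (h.trans hj0.symm)
          rw [this, hj0, hσk]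
      · intro j
        rw [hmemsucc, IH2 j, hσk]
        constructor
        · rintro (h | h)
          · omega
          · have : j = j0 := Fin.ext h
            rw [this, hj0]; omega
        · intro h
          rcases Nat.lt_succ_iff_lt_or_eq.1 h with h' | h'
          · exact Or.inl h'
          · have : j = j0 := hf (h'.trans hj0.symm)
            rw [this]; exact Or.inr rfl
    · push_neg at hex
      have hx : rconst f k ≤ x k := hT2 hex
      have hbig : n ≤ shuffleSeq x k := by
        by_contra hlt
        push_neg at hlt
        set j0 : Fin n := ⟨shuffleSeq x k, hlt⟩ with hj0def
        have hpj0 : (j0 : ℕ) ∉ shufflePrefix x k := shuffleSeq_notMem x k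
        have hfj0 : k < f j0 := by
          have := (IH2 j0).2
          have h2 : ¬ f j0 < k := fun hh => hpj0 (this hh)
          have := hex j0
          omega
        have hxc : x k = Nat.count (fun m => m ∉ shufflePrefix x k) (shuffleSeq x k) := by
          apply Nat.nth_injective (notMem_infinite (shufflePrefix x k))
          show Nat.nth _ _ = Nat.nth _ _
          rw [Nat.nth_count hpj0]
          rfl
        have hcard : Nat.count (fun m => m ∉ shufflePrefix x k) (shuffleSeq x k)
            = (Finset.univ.filter
                (fun i : Fin n => (i : ℕ) < shuffleSeq x k ∧ k < f i)).card := by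
          rw [Nat.count_eq_card_filter_range]
          apply card_filter_fin _ (le_of_lt hlt)
          intro i hi
          rw [IH2 i]
          have := hex i
          omega
        have hlt2 : (Finset.univ.filter
            (fun i : Fin n => (i : ℕ) < shuffleSeq x k ∧ k < f i)).card < rconst f k := by
          rw [rconst]
          apply Finset.card_lt_card
          rw [Finset.ssubset_iff_of_subset]
          · exact ⟨j0, by simp [hfj0], by simp [hj0def]⟩
          · intro i hi
            simp only [Finset.mem_filter, Finset.mem_univ, true_and] at hi ⊢
            exact hi.2
        omega
      constructor
      · intro j hj
        have hne := hex j
        exact IH1 j (by omega)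
      · intro j
        rw [hmemsucc, IH2 j]
        have hne := hex j
        have hjn : (j : ℕ) < n := j.2
        constructor
        · rintro (h | h)
          · omega
          · omega
        · intro h; exact Or.inl (by omega)

lemma lemB (hf : Function.Injective f) (x : ℕ → ℕ) :
    (∀ j : Fin n, shuffleSeq x (f j) = (j : ℕ)) ↔
      (∀ k, k < Nbd f → condT f k (x k)) := by
  constructor
  · intro hE
    have hmem : ∀ k, ∀ j : Fin n, ((j : ℕ) ∈ shufflePrefix x k ↔ f j < k) := by
      intro k j
      rw [mem_shufflePrefix]
      constructor
      · rintro ⟨i, hik, hs⟩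
        have : i = f j := shuffleSeq_injective x (hs.trans (hE j).symm)
        omega
      · intro h
        exact ⟨f j, h, hE j⟩
    intro k hk
    constructor
    · intro j0 hj0
      have hpj0 : (j0 : ℕ) ∉ shufflePrefix x k := fun h => by
        have := (hmem k j0).1 h; omega
      have hσ : shuffleSeq x k = (j0 : ℕ) := by rw [← hj0]; exact hE j0
      have : x k = Nat.count (fun m => m ∉ shufflePrefix x k) (j0 : ℕ) := by
        apply Nat.nth_injective (notMem_infinite (shufflePrefix x k))
        show Nat.nth _ _ = Nat.nth _ _
        rw [Nat.nth_count hpj0]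
        exact hσ
      rw [this, countB f hf x k (hmem k) j0 hj0]
    · intro hfree
      have hbig : n ≤ shuffleSeq x k := by
        by_contra hlt
        push_neg at hlt
        have := hE ⟨shuffleSeq x k, hlt⟩
        have heq : f ⟨shuffleSeq x k, hlt⟩ = k :=
          shuffleSeq_injective x this
        exact hfree _ heq
      have hp' : shuffleSeq x k ∉ shufflePrefix x k := shuffleSeq_notMem x k
      have hxc : x k = Nat.count (fun m => m ∉ shufflePrefix x k) (shuffleSeq x k) := by
        apply Nat.nth_injective (notMem_infinite (shufflePrefix x k))
        show Nat.nth _ _ = Nat.nth _ _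
        rw [Nat.nth_count hp']
        rfl
      have hge : rconst f k ≤ Nat.count (fun m => m ∉ shufflePrefix x k) (shuffleSeq x k) := by
        rw [Nat.count_eq_card_filter_range, rconst]
        refine Finset.card_le_card_of_injOn (fun j : Fin n => (j : ℕ)) ?_ ?_
        · intro j hj
          simp only [Finset.mem_coe, Finset.mem_filter, Finset.mem_univ, true_and] at hj
          simp only [Finset.mem_coe, Finset.mem_filter, Finset.mem_range]
          refine ⟨lt_of_lt_of_le j.2 hbig, ?_⟩
          rw [hmem k j]
          omega
        · intro a _ b _ hab
          exact Fin.ext hab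
      omega
  · intro hT j
    exact (mainB f hf x hT (Nbd f) le_rfl).1 j (lt_Nbd f j)

lemma card_image_type (hf : Function.Injective f) (t : ℕ) (Q : Fin n → Prop)
    [DecidablePred Q] (hQ : ∀ i, Q i → f i < t) :
    ((Finset.range t).filter (fun m => ∃ i : Fin n, Q i ∧ f i = m)).card
      = (Finset.univ.filter Q).card := by
  symm
  apply Finset.card_bij (fun i _ => f i)
  · intro i hi
    have hQi := (Finset.mem_filter.1 hi).2
    simp only [Finset.mem_filter, Finset.mem_range]
    exact ⟨hQ i hQi, i, hQi, rfl⟩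
  · intro a _ b _ hab
    exact hf hab
  · intro m hm
    obtain ⟨i, hQi, hfi⟩ := (Finset.mem_filter.1 hm).2
    exact ⟨i, Finset.mem_filter.2 ⟨Finset.mem_univ i, hQi⟩, hfi⟩

lemma step2 (hf : Function.Injective f) (j : Fin n) :
    cconst f j + (Finset.univ.filter
      (fun i : Fin n => (i : ℕ) < (j : ℕ) ∧ f i < f j)).card = f j := by
  have key : ((Finset.range (f j)).filter
      (fun m => ¬ ∀ i : Fin n, (i : ℕ) < (j : ℕ) → f i ≠ m)).card
      = (Finset.univ.filter (fun i : Fin n => (i : ℕ) < (j : ℕ) ∧ f i < f j)).card := by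
    rw [← card_image_type f hf (f j) (fun i => (i : ℕ) < (j : ℕ) ∧ f i < f j)
      (fun i hi => hi.2)]
    congr 1
    apply Finset.filter_congr
    intro m hm
    have hm' := Finset.mem_range.1 hm
    push_neg
    constructor
    · rintro ⟨i, hi, he⟩; exact ⟨i, ⟨hi, by omega⟩, he⟩
    · rintro ⟨i, ⟨hi, _⟩, he⟩; exact ⟨i, hi, he⟩
  have := Finset.card_filter_add_card_filter_not (s := Finset.range (f j))
    (fun m => ∀ i : Fin n, (i : ℕ) < (j : ℕ) → f i ≠ m)
  rw [Finset.card_range] at this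
  rw [cconst]
  omega

lemma step3 (hf : Function.Injective f) (j : Fin n) :
    dconst f j + (Finset.univ.filter (fun i : Fin n => f i < f j)).card = f j := by
  have key : ((Finset.range (f j)).filter (fun m => ¬ ∀ i : Fin n, f i ≠ m)).card
      = (Finset.univ.filter (fun i : Fin n => f i < f j)).card := by
    rw [← card_image_type f hf (f j) (fun i => f i < f j) (fun i hi => hi)]
    congr 1
    apply Finset.filter_congr
    intro m hm
    have hm' := Finset.mem_range.1 hm
    push_neg
    constructor
    · rintro ⟨i, he⟩; exact ⟨i, by omega, he⟩
    · rintro ⟨i, _, he⟩; exact ⟨i, he⟩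
  have := Finset.card_filter_add_card_filter_not (s := Finset.range (f j))
    (fun m => ∀ i : Fin n, f i ≠ m)
  rw [Finset.card_range] at this
  rw [dconst]
  omega

lemma step1 (hf : Function.Injective f) :
    ∑ k ∈ (Finset.range (Nbd f)).filter (fun k => ∀ j : Fin n, f j ≠ k), rconst f k
      = ∑ j : Fin n, dconst f j := by
  have lhs : ∀ k, rconst f k = ∑ j : Fin n, if k < f j then 1 else 0 := by
    intro k; rw [rconst, Finset.card_filter]
  simp_rw [lhs]
  rw [Finset.sum_comm]
  apply Finset.sum_congr rfl
  intro j _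
  rw [← Finset.card_filter, dconst]
  congr 1
  ext k
  simp only [Finset.mem_filter, Finset.mem_range]
  have hN := lt_Nbd f j
  constructor
  · rintro ⟨⟨_, h2⟩, h3⟩; exact ⟨h3, h2⟩
  · rintro ⟨h1, h2⟩; exact ⟨⟨by omega, h2⟩, h1⟩

lemma step4 (hf : Function.Injective f) :
    ∑ j : Fin n, (Finset.univ.filter (fun i : Fin n => f i < f j)).card
      = ∑ j : Fin n, (Finset.univ.filter
          (fun i : Fin n => (i : ℕ) < (j : ℕ) ∧ f i < f j)).card
        + ∑ j : Fin n, aconst f j := by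
  have point : ∀ j i : Fin n, (if f i < f j then 1 else 0)
      = (if (i : ℕ) < (j : ℕ) ∧ f i < f j then 1 else 0)
        + (if (j : ℕ) < (i : ℕ) ∧ f i < f j then 1 else 0) := by
    intro j i
    rcases lt_trichotomy (i : ℕ) (j : ℕ) with h | h | h
    · split_ifs <;> omega
    · have : i = j := Fin.ext h
      subst this
      simp
    · split_ifs <;> omega
  simp_rw [Finset.card_filter, point, Finset.sum_add_distrib]
  congr 1
  rw [Finset.sum_comm]
  apply Finset.sum_congr rfl
  intro j _
  rw [aconst, Finset.card_filter]

lemma exponents (hf : Function.Injective f) :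
    ∑ j : Fin n, cconst f j
      = ∑ j : Fin n, aconst f j
        + ∑ k ∈ (Finset.range (Nbd f)).filter (fun k => ∀ j : Fin n, f j ≠ k), rconst f k := by
  have h2 := fun j => step2 f hf j
  have h3 := fun j => step3 f hf j
  have h4 := step4 f hf
  have h1 := step1 f hf
  have e2 : ∑ j : Fin n, cconst f j + ∑ j : Fin n, (Finset.univ.filter
      (fun i : Fin n => (i : ℕ) < (j : ℕ) ∧ f i < f j)).card = ∑ j : Fin n, f j := by
    rw [← Finset.sum_add_distrib]
    exact Finset.sum_congr rfl (fun j _ => h2 j)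
  have e3 : ∑ j : Fin n, dconst f j + ∑ j : Fin n, (Finset.univ.filter
      (fun i : Fin n => f i < f j)).card = ∑ j : Fin n, f j := by
    rw [← Finset.sum_add_distrib]
    exact Finset.sum_congr rfl (fun j _ => h3 j)
  rw [h1]
  omega

end Comb

lemma geom_tail {q : ℝ} (hq0 : 0 < q) {Ω : Type*} [MeasurableSpace Ω] (P : Measure Ω)
    [IsProbabilityMeasure P] (g : Ω → ℕ) (hg : Measurable g)
    (hgeom : ∀ i : ℕ, P {ω | g ω = i} = ENNReal.ofReal ((1 - q) * q ^ i)) (r : ℕ) :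
    P {ω | r ≤ g ω} = ENNReal.ofReal (q ^ r) := by
  have hpre : ∀ v : ℕ, g ⁻¹' {v} = {ω | g ω = v} := fun v => rfl
  have hmeasv : ∀ v : ℕ, MeasurableSet (g ⁻¹' {v}) := fun v => hg (measurableSet_singleton v)
  have hsum : ∀ (h : ℕ → ℕ), Function.Injective h →
      P (⋃ i : ℕ, g ⁻¹' {h i}) = ∑' i : ℕ, ENNReal.ofReal ((1 - q) * q ^ (h i)) := by
    intro h hinj
    rw [measure_iUnion ?_ (fun i => hmeasv (h i))]
    · exact tsum_congr fun i => by rw [hpre, hgeom]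
    · intro i j hij
      apply Disjoint.preimage
      simp only [Set.disjoint_singleton]
      exact fun he => hij (hinj he)
  have hone : ∑' i : ℕ, ENNReal.ofReal ((1 - q) * q ^ i) = 1 := by
    have := hsum id Function.injective_id
    simp only [id] at this
    rw [← this]
    have : ⋃ i : ℕ, g ⁻¹' {i} = Set.univ := by
      ext ω; simp
    rw [this, measure_univ]
  have hset : {ω | r ≤ g ω} = ⋃ i : ℕ, g ⁻¹' {r + i} := by
    ext ω
    simp only [Set.mem_setOf_eq, Set.mem_iUnion, Set.mem_preimage, Set.mem_singleton_iff]
    constructor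
    · intro h; exact ⟨g ω - r, by omega⟩
    · rintro ⟨i, h⟩; omega
  rw [hset, hsum (fun i => r + i) (fun a b hab => by dsimp only at hab; omega)]
  have : ∀ i : ℕ, ENNReal.ofReal ((1 - q) * q ^ (r + i))
      = ENNReal.ofReal (q ^ r) * ENNReal.ofReal ((1 - q) * q ^ i) := by
    intro i
    rw [← ENNReal.ofReal_mul (by positivity)]
    congr 1
    rw [pow_add]
    ring
  simp_rw [this]
  rw [ENNReal.tsum_mul_left, hone, mul_one]

/-- the Mallows measure (the law of the random bijection `σ` of `ℕ` driving
the infinite `q`-shuffle) is invariant under group inversion: for every `n ≥ 1` and every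
injective `f : {0, …, n-1} → ℕ`,
`P(σ(j) = f(j) ∀ j < n) = P(σ(f(j)) = j ∀ j < n)`.  Here `ξ_0, ξ_1, …` are independent with
the (0-indexed) geometric law `P(ξ = i) = (1-q) q^i`. -/
theorem stmt_16 (q : ℝ) (hq0 : 0 < q) (hq1 : q < 1)
    (Ω : Type*) [MeasurableSpace Ω] (P : Measure Ω) [IsProbabilityMeasure P]
    (ξ : ℕ → Ω → ℕ) (hmeas : ∀ j, Measurable (ξ j))
    (hindep : iIndepFun ξ P)
    (hgeom : ∀ j i : ℕ, P {ω | ξ j ω = i} = ENNReal.ofReal ((1 - q) * q ^ i))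
    (n : ℕ) (hn : 1 ≤ n) (f : Fin n → ℕ) (hf : Function.Injective f) :
    P {ω | ∀ j : Fin n, shuffleSeq (fun t => ξ t ω) (j : ℕ) = f j} =
      P {ω | ∀ j : Fin n, shuffleSeq (fun t => ξ t ω) (f j) = (j : ℕ)} := by
  classical
  have h1q : (0:ℝ) ≤ 1 - q := by linarith
  set Sset : ℕ → Set ℕ := fun k => {v | ∀ j : Fin n, (j : ℕ) = k → v = cconst f j} with hSdef
  set Tset : ℕ → Set ℕ := fun k => {v | condT f k v} with hTdef
  set cN : ℕ → ℕ := fun k => if h : k < n then cconst f ⟨k, h⟩ else 0 with hcNdef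
  have hset1 : {ω | ∀ j : Fin n, shuffleSeq (fun t => ξ t ω) (j : ℕ) = f j}
      = ⋂ k ∈ Finset.range n, ξ k ⁻¹' Sset k := by
    ext ω
    simp only [Set.mem_setOf_eq, Set.mem_iInter, Finset.mem_range, Set.mem_preimage,
      hSdef]
    rw [lemA f hf (fun t => ξ t ω)]
    constructor
    · intro h k hk j hj
      subst hj
      exact h j
    · intro h j
      exact h (j : ℕ) j.2 j rfl
  have hset2 : {ω | ∀ j : Fin n, shuffleSeq (fun t => ξ t ω) (f j) = (j : ℕ)}
      = ⋂ k ∈ Finset.range (Nbd f), ξ k ⁻¹' Tset k := by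
    ext ω
    simp only [Set.mem_setOf_eq, Set.mem_iInter, Finset.mem_range, Set.mem_preimage,
      hTdef]
    exact lemB f hf (fun t => ξ t ω)
  rw [hset1, hset2,
    hindep.measure_inter_preimage_eq_mul (Finset.range n)
      (fun i _ => MeasurableSet.of_discrete),
    hindep.measure_inter_preimage_eq_mul (Finset.range (Nbd f))
      (fun i _ => MeasurableSet.of_discrete)]
  have hprod1 : ∏ k ∈ Finset.range n, P (ξ k ⁻¹' Sset k)
      = ENNReal.ofReal ((1 - q) ^ n * q ^ (∑ j : Fin n, cconst f j)) := by
    have hfac : ∀ k ∈ Finset.range n, P (ξ k ⁻¹' Sset k)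
        = ENNReal.ofReal ((1 - q) * q ^ (cN k)) := by
      intro k hk
      rw [Finset.mem_range] at hk
      have hst : ξ k ⁻¹' Sset k = {ω | ξ k ω = cN k} := by
        ext ω
        simp only [Set.mem_preimage, hSdef, Set.mem_setOf_eq, hcNdef, dif_pos hk]
        constructor
        · intro h; exact h ⟨k, hk⟩ rfl
        · intro h j hj
          have : j = ⟨k, hk⟩ := Fin.ext hj
          rw [this]; exact h
      rw [hst]
      exact hgeom k (cN k)
    rw [Finset.prod_congr rfl hfac,
      ← ENNReal.ofReal_prod_of_nonneg (fun i _ => mul_nonneg h1q (pow_nonneg hq0.le _))]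
    congr 1
    rw [Finset.prod_mul_distrib, Finset.prod_const, Finset.card_range,
      Finset.prod_pow_eq_pow_sum]
    congr 1
    rw [← Fin.sum_univ_eq_sum_range (fun k => cN k) n]
    congr 1
    apply Finset.sum_congr rfl
    intro j _
    simp only [hcNdef, dif_pos j.2]
  have hprod2 : ∏ k ∈ Finset.range (Nbd f), P (ξ k ⁻¹' Tset k)
      = ENNReal.ofReal ((1 - q) ^ n * q ^ (∑ j : Fin n, aconst f j))
        * ENNReal.ofReal (q ^ (∑ k ∈ (Finset.range (Nbd f)).filter
            (fun k => ∀ j : Fin n, f j ≠ k), rconst f k)) := by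
    rw [← Finset.prod_filter_mul_prod_filter_not (Finset.range (Nbd f))
      (fun k => ∃ j : Fin n, f j = k)]
    congr 1
    · have himg : (Finset.range (Nbd f)).filter (fun k => ∃ j : Fin n, f j = k)
          = Finset.univ.image f := by
        ext k
        simp only [Finset.mem_filter, Finset.mem_range, Finset.mem_image, Finset.mem_univ,
          true_and]
        constructor
        · rintro ⟨_, j, hj⟩; exact ⟨j, hj⟩
        · rintro ⟨j, hj⟩; exact ⟨hj ▸ lt_Nbd f j, j, hj⟩
      rw [himg, Finset.prod_image (fun a _ b _ h => hf h)]
      have hfac : ∀ j : Fin n, P (ξ (f j) ⁻¹' Tset (f j))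
          = ENNReal.ofReal ((1 - q) * q ^ aconst f j) := by
        intro j
        have hst : ξ (f j) ⁻¹' Tset (f j) = {ω | ξ (f j) ω = aconst f j} := by
          ext ω
          simp only [Set.mem_preimage, hTdef, Set.mem_setOf_eq, condT]
          constructor
          · rintro ⟨h1, _⟩; exact h1 j rfl
          · intro h
            refine ⟨fun j' hj' => ?_, fun hfree => absurd rfl (hfree j)⟩
            have : j' = j := hf hj'
            rw [this]; exact h
        rw [hst]
        exact hgeom (f j) (aconst f j)
      rw [Finset.prod_congr rfl (fun j _ => hfac j),
        ← ENNReal.ofReal_prod_of_nonneg (fun i _ => mul_nonneg h1q (pow_nonneg hq0.le _))]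
      congr 1
      rw [Finset.prod_mul_distrib, Finset.prod_const, Finset.card_univ, Fintype.card_fin,
        Finset.prod_pow_eq_pow_sum]
    · have hfilter : (Finset.range (Nbd f)).filter (fun k => ¬ ∃ j : Fin n, f j = k)
          = (Finset.range (Nbd f)).filter (fun k => ∀ j : Fin n, f j ≠ k) := by
        apply Finset.filter_congr
        intro k _
        push_neg
        rfl
      rw [hfilter]
      have hfac : ∀ k ∈ (Finset.range (Nbd f)).filter (fun k => ∀ j : Fin n, f j ≠ k),
          P (ξ k ⁻¹' Tset k) = ENNReal.ofReal (q ^ rconst f k) := by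
        intro k hk
        have hfree := (Finset.mem_filter.1 hk).2
        have hst : ξ k ⁻¹' Tset k = {ω | rconst f k ≤ ξ k ω} := by
          ext ω
          simp only [Set.mem_preimage, hTdef, Set.mem_setOf_eq, condT]
          constructor
          · rintro ⟨_, h2⟩; exact h2 hfree
          · intro h; exact ⟨fun j hj => absurd hj (hfree j), fun _ => h⟩
        rw [hst]
        exact geom_tail hq0 P (ξ k) (hmeas k) (hgeom k) (rconst f k)
      rw [Finset.prod_congr rfl hfac,
        ← ENNReal.ofReal_prod_of_nonneg (fun i _ => pow_nonneg hq0.le _)]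
      congr 1
      rw [Finset.prod_pow_eq_pow_sum]
  rw [hprod1, hprod2,
    ← ENNReal.ofReal_mul (mul_nonneg (pow_nonneg h1q _) (pow_nonneg hq0.le _))]
  congr 1
  rw [exponents f hf, pow_add]
  ring
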